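/- Let I = (𝒳, 𝒞) be an instance of 23SAT containing a bad pair: clauses c₁, c₂ and literals l₁, l₂ with {l₁, l₂} ⊆ c₁ and {¬l₁, ¬l₂} ⊆ c₂, where both l₁ and ¬l₁ are minor literals. Then I is satisfiable if and only if the instance obtained from I by deleting the clauses c₁ and c₂ is satisfiable. -/
import Mathlib


/-- A literal: a variable together with a polarity. -/
structure Lit (α : Type*) where
  var : α
  pos : Bool
deriving DecidableEq

/-- The negation of a literal. -/
def Lit.neg {α : Type*} (l : Lit α) : Lit α := ⟨l.var, !l.pos⟩

/-- Evaluation of a literal under a truth assignment. -/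
def Lit.eval {α : Type*} (t : α → Bool) (l : Lit α) : Bool :=
  if l.pos then t l.var else !(t l.var)

/-- A truth assignment satisfies a clause if it contains a true literal. -/
def SatisfiesClause {α : Type*} (t : α → Bool) (c : Finset (Lit α)) : Prop :=
  ∃ l ∈ c, Lit.eval t l = true

/-- A set of clauses is satisfiable. -/
def SatInstance {α : Type*} (𝒞 : Finset (Finset (Lit α))) : Prop :=
  ∃ t : α → Bool, ∀ c ∈ 𝒞, SatisfiesClause t c

/-- A literal is major if it occurs in at least two clauses of `𝒞`. -/
def MajorLit {α : Type*} [DecidableEq α] (𝒞 : Finset (Finset (Lit α))) (l : Lit α) : Prop :=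
  2 ≤ (𝒞.filter (fun c => l ∈ c)).card

/-- A literal is minor if it occurs in exactly one clause of `𝒞`. -/
def MinorLit {α : Type*} [DecidableEq α] (𝒞 : Finset (Finset (Lit α))) (l : Lit α) : Prop :=
  (𝒞.filter (fun c => l ∈ c)).card = 1

theorem delete_bad_pair_minor_case {α : Type*} [DecidableEq α]
    (𝒞 : Finset (Finset (Lit α)))
    (hsize : ∀ c ∈ 𝒞, c.card = 2 ∨ c.card = 3)
    (hcons : ∀ c ∈ 𝒞, ∀ l ∈ c, l.neg ∉ c)
    (hmaj : ∀ c ∈ 𝒞, ∀ l₁ ∈ c, ∀ l₂ ∈ c, MajorLit 𝒞 l₁ → MajorLit 𝒞 l₂ → l₁ = l₂)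
    (c₁ c₂ : Finset (Lit α)) (hc₁ : c₁ ∈ 𝒞) (hc₂ : c₂ ∈ 𝒞) (hcc : c₁ ≠ c₂)
    (l₁ l₂ : Lit α) (hll : l₁ ≠ l₂)
    (h₁ : l₁ ∈ c₁) (h₂ : l₂ ∈ c₁) (h₃ : l₁.neg ∈ c₂) (h₄ : l₂.neg ∈ c₂)
    (hm₁ : MinorLit 𝒞 l₁) (hm₂ : MinorLit 𝒞 l₁.neg) :
    SatInstance 𝒞 ↔ SatInstance (𝒞 \ {c₁, c₂}) := by

  constructor
  · rintro ⟨t, ht⟩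
    exact ⟨t, fun c hc => ht c (Finset.mem_sdiff.mp hc).1⟩
  · rintro ⟨t, ht⟩
    -- l₂ has a different variable from l₁
    have hvar : l₂.var ≠ l₁.var := by
      intro h
      by_cases hp : l₂.pos = l₁.pos
      · exact hll (by cases l₁; cases l₂; simp_all)
      · have : l₂ = l₁.neg := by
          obtain ⟨a, p⟩ := l₁; obtain ⟨b, q⟩ := l₂
          cases p <;> cases q <;> simp_all [Lit.neg]
        exact hcons c₁ hc₁ l₁ h₁ (this ▸ h₂)
    set e : Bool := !(Lit.eval t l₂) with he
    set v : Bool := if l₁.pos then e else !e with hv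
    refine ⟨Function.update t l₁.var v, ?_⟩
    have hup₁ : Lit.eval (Function.update t l₁.var v) l₁ = e := by
      simp [Lit.eval, Function.update, hv]
      cases l₁.pos <;> simp
    have hup₂ : Lit.eval (Function.update t l₁.var v) l₁.neg = !e := by
      simp [Lit.eval, Lit.neg, Function.update, hv]
      cases l₁.pos <;> simp
    have hother : ∀ l : Lit α, l.var ≠ l₁.var →
        Lit.eval (Function.update t l₁.var v) l = Lit.eval t l := by
      intro l hl
      simp [Lit.eval, Function.update, hl]
    intro c hc
    by_cases hcE₁ : c = c₁
    · subst hcE₁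
      by_cases hl2 : Lit.eval t l₂ = true
      · exact ⟨l₂, h₂, by rw [hother l₂ hvar]; exact hl2⟩
      · refine ⟨l₁, h₁, ?_⟩
        rw [hup₁, he]
        simp_all
    by_cases hcE₂ : c = c₂
    · subst hcE₂
      by_cases hl2 : Lit.eval t l₂ = true
      · refine ⟨l₁.neg, h₃, ?_⟩
        rw [hup₂, he, hl2]
        rfl
      · refine ⟨l₂.neg, h₄, ?_⟩
        have hvar' : (l₂.neg).var ≠ l₁.var := hvar
        rw [hother _ hvar']
        simp [Lit.eval, Lit.neg] at hl2 ⊢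
        cases hp2 : l₂.pos <;> simp_all [Lit.eval]
    · have hcmem : c ∈ 𝒞 \ {c₁, c₂} := by
        simp [Finset.mem_sdiff, hc, hcE₁, hcE₂]
      obtain ⟨l, hl, hle⟩ := ht c hcmem
      refine ⟨l, hl, ?_⟩
      have hlvar : l.var ≠ l₁.var := by
        intro h
        by_cases hp : l.pos = l₁.pos
        · have : l = l₁ := by cases l; cases l₁; simp_all
          subst this
          have := Finset.card_le_one.mp (le_of_eq hm₁) c
            (Finset.mem_filter.mpr ⟨hc, hl⟩) c₁ (Finset.mem_filter.mpr ⟨hc₁, h₁⟩)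
          exact hcE₁ this
        · have : l = l₁.neg := by
            obtain ⟨a, p⟩ := l; obtain ⟨b, q⟩ := l₁
            cases p <;> cases q <;> simp_all [Lit.neg]
          subst this
          have := Finset.card_le_one.mp (le_of_eq hm₂) c
            (Finset.mem_filter.mpr ⟨hc, hl⟩) c₂ (Finset.mem_filter.mpr ⟨hc₂, h₃⟩)
          exact hcE₂ this
      rw [hother l hlvar]
      exact hle
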